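/- Let Θ ∈ ℝ^{p×p} be symmetric positive definite and diagonally dominant in the sense that there is 0 ≤ ρ < 1 with Σ_{j'≠j} |Θ_{j'j}| ≤ ρ·Θ_{jj} for every j. Let α ≥ 0, let Λ = diag(τ₁,…,τ_n) with all τ_i ≥ 0, let D = diag(Θ₁₁,…,Θ_pp), and let R ∈ ℝ^{n×p}. Suppose W₂ ∈ ℝ^{n×p} satisfies W₂Θ + αΛW₂ = R and W₄ ∈ ℝ^{n×p} satisfies W₄D + αΛW₄ = R. Then (1 − ρ)·‖W₂‖_∞ ≤ ‖W₄‖_∞ ≤ (1 + ρ)·‖W₂‖_∞. -/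

import Mathlib

open Matrix Finset

/-- The maximum absolute entry norm `‖M‖_∞ = max_{ij} |M_{ij}|` of a matrix. -/
noncomputable def maxAbsEntry {n p : ℕ} (M : Matrix (Fin n) (Fin p) ℝ) : ℝ :=
  ⨆ i, ⨆ j, |M i j|

lemma abs_le_maxAbsEntry {n p : ℕ} (M : Matrix (Fin n) (Fin p) ℝ) (i : Fin n) (j : Fin p) :
    |M i j| ≤ maxAbsEntry M := by
  unfold maxAbsEntry
  have h1 : |M i j| ≤ ⨆ j, |M i j| :=
    le_ciSup (Set.Finite.bddAbove (Set.finite_range fun j => |M i j|)) j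
  have h2 : (⨆ j, |M i j|) ≤ ⨆ i, ⨆ j, |M i j| :=
    le_ciSup (Set.Finite.bddAbove (Set.finite_range fun i => ⨆ j, |M i j|)) i
  exact h1.trans h2

lemma maxAbsEntry_le {n p : ℕ} (hn : 0 < n) (hp : 0 < p) (M : Matrix (Fin n) (Fin p) ℝ)
    (c : ℝ) (h : ∀ i j, |M i j| ≤ c) : maxAbsEntry M ≤ c := by
  haveI : Nonempty (Fin n) := ⟨⟨0, hn⟩⟩
  haveI : Nonempty (Fin p) := ⟨⟨0, hp⟩⟩
  exact ciSup_le fun i => ciSup_le fun j => h i j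

theorem weighted_vs_diagonal_smoothing_error
    (n p : ℕ) (hn : 0 < n) (hp : 0 < p)
    (Θ : Matrix (Fin p) (Fin p) ℝ) (hΘ : Θ.PosDef)
    (ρ : ℝ) (hρ₀ : 0 ≤ ρ) (hρ₁ : ρ < 1)
    (hdom : ∀ j, ∑ j' ∈ Finset.univ.erase j, |Θ j' j| ≤ ρ * Θ j j)
    (α : ℝ) (hα : 0 ≤ α) (τ : Fin n → ℝ) (hτ : ∀ i, 0 ≤ τ i)
    (R : Matrix (Fin n) (Fin p) ℝ)
    (W₂ W₄ : Matrix (Fin n) (Fin p) ℝ)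
    (hW₂ : W₂ * Θ + α • (Matrix.diagonal τ * W₂) = R)
    (hW₄ : W₄ * Matrix.diagonal (fun j => Θ j j) + α • (Matrix.diagonal τ * W₄) = R) :
    (1 - ρ) * maxAbsEntry W₂ ≤ maxAbsEntry W₄ ∧
      maxAbsEntry W₄ ≤ (1 + ρ) * maxAbsEntry W₂ := by
  set M₂ := maxAbsEntry W₂ with hM₂
  set M₄ := maxAbsEntry W₄ with hM₄
  have hΘd : ∀ j, 0 < Θ j j := by
    intro j
    have hx : (Pi.single j 1 : Fin p → ℝ) ≠ 0 := by
      intro h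
      have := congrFun h j
      simp at this
    have := hΘ.dotProduct_mulVec_pos hx
    simpa [Matrix.mulVec_single, dotProduct, Pi.single_apply, Finset.sum_ite_eq] using this
  have hc : ∀ (i : Fin n) (j : Fin p), 0 < Θ j j + α * τ i := fun i j =>
    lt_of_lt_of_le (hΘd j) (by nlinarith [mul_nonneg hα (hτ i)])
  -- entrywise equations
  have h2 : ∀ (i : Fin n) (j : Fin p),
      W₂ i j * (Θ j j + α * τ i) + ∑ k ∈ Finset.univ.erase j, W₂ i k * Θ k j = R i j := by
    intro i j
    have := congrFun (congrFun hW₂ i) j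
    simp only [Matrix.add_apply, Matrix.smul_apply, Matrix.diagonal_mul, smul_eq_mul] at this
    rw [Matrix.mul_apply] at this
    rw [← this, ← Finset.add_sum_erase _ _ (Finset.mem_univ j)]
    ring
  have h4 : ∀ (i : Fin n) (j : Fin p),
      W₄ i j * (Θ j j + α * τ i) = R i j := by
    intro i j
    have := congrFun (congrFun hW₄ i) j
    simp only [Matrix.add_apply, Matrix.smul_apply, Matrix.diagonal_mul,
      Matrix.mul_diagonal, smul_eq_mul] at this
    rw [← this]; ring
  have hM₂0 : 0 ≤ M₂ := le_trans (abs_nonneg _) (abs_le_maxAbsEntry W₂ ⟨0, hn⟩ ⟨0, hp⟩)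
  have hM₄0 : 0 ≤ M₄ := le_trans (abs_nonneg _) (abs_le_maxAbsEntry W₄ ⟨0, hn⟩ ⟨0, hp⟩)
  -- bound on the off-diagonal sum
  have hS : ∀ (i : Fin n) (j : Fin p),
      |∑ k ∈ Finset.univ.erase j, W₂ i k * Θ k j| ≤ ρ * M₂ * Θ j j := by
    intro i j
    calc |∑ k ∈ Finset.univ.erase j, W₂ i k * Θ k j|
        ≤ ∑ k ∈ Finset.univ.erase j, |W₂ i k * Θ k j| := Finset.abs_sum_le_sum_abs _ _
      _ ≤ ∑ k ∈ Finset.univ.erase j, M₂ * |Θ k j| := by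
          refine Finset.sum_le_sum fun k _ => ?_
          rw [abs_mul]
          exact mul_le_mul_of_nonneg_right (abs_le_maxAbsEntry W₂ i k) (abs_nonneg _)
      _ = M₂ * ∑ k ∈ Finset.univ.erase j, |Θ k j| := (Finset.mul_sum _ _ _).symm
      _ ≤ M₂ * (ρ * Θ j j) := mul_le_mul_of_nonneg_left (hdom j) hM₂0
      _ = ρ * M₂ * Θ j j := by ring
  constructor
  · -- (1-ρ) M₂ ≤ M₄
    have key : ∀ (i : Fin n) (j : Fin p), |W₂ i j| ≤ M₄ + ρ * M₂ := by
      intro i j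
      have hcij := hc i j
      have hdj := (hΘd j).le
      have e : W₂ i j * (Θ j j + α * τ i) =
          W₄ i j * (Θ j j + α * τ i) - ∑ k ∈ Finset.univ.erase j, W₂ i k * Θ k j := by
        rw [h4 i j, ← h2 i j]; ring
      have e2 : |W₂ i j| * (Θ j j + α * τ i) = |W₂ i j * (Θ j j + α * τ i)| := by
        rw [abs_mul, abs_of_pos hcij]
      have : |W₂ i j| * (Θ j j + α * τ i) ≤ (M₄ + ρ * M₂) * (Θ j j + α * τ i) := by
        rw [e2, e]
        calc |W₄ i j * (Θ j j + α * τ i) - ∑ k ∈ Finset.univ.erase j, W₂ i k * Θ k j|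
            ≤ |W₄ i j * (Θ j j + α * τ i)| + |∑ k ∈ Finset.univ.erase j, W₂ i k * Θ k j| :=
              abs_sub _ _
          _ ≤ M₄ * (Θ j j + α * τ i) + ρ * M₂ * Θ j j := by
              refine add_le_add ?_ (hS i j)
              rw [abs_mul, abs_of_pos hcij]
              exact mul_le_mul_of_nonneg_right (abs_le_maxAbsEntry W₄ i j) hcij.le
          _ ≤ (M₄ + ρ * M₂) * (Θ j j + α * τ i) := by
              nlinarith [mul_nonneg (mul_nonneg hρ₀ hM₂0) (mul_nonneg hα (hτ i))]
      exact le_of_mul_le_mul_right this hcij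
    have := maxAbsEntry_le hn hp W₂ (M₄ + ρ * M₂) key
    rw [← hM₂] at this; linarith
  · -- M₄ ≤ (1+ρ) M₂
    refine maxAbsEntry_le hn hp W₄ _ fun i j => ?_
    have hcij := hc i j
    have e : W₄ i j * (Θ j j + α * τ i) =
        W₂ i j * (Θ j j + α * τ i) + ∑ k ∈ Finset.univ.erase j, W₂ i k * Θ k j := by
      rw [h4 i j, ← h2 i j]
    have e2 : |W₄ i j| * (Θ j j + α * τ i) = |W₄ i j * (Θ j j + α * τ i)| := by
      rw [abs_mul, abs_of_pos hcij]
    have : |W₄ i j| * (Θ j j + α * τ i) ≤ (1 + ρ) * M₂ * (Θ j j + α * τ i) := by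
      rw [e2, e]
      calc |W₂ i j * (Θ j j + α * τ i) + ∑ k ∈ Finset.univ.erase j, W₂ i k * Θ k j|
          ≤ |W₂ i j * (Θ j j + α * τ i)| + |∑ k ∈ Finset.univ.erase j, W₂ i k * Θ k j| :=
            abs_add_le _ _
        _ ≤ M₂ * (Θ j j + α * τ i) + ρ * M₂ * Θ j j := by
            refine add_le_add ?_ (hS i j)
            rw [abs_mul, abs_of_pos hcij]
            exact mul_le_mul_of_nonneg_right (abs_le_maxAbsEntry W₂ i j) hcij.le
        _ ≤ (1 + ρ) * M₂ * (Θ j j + α * τ i) := by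
            nlinarith [mul_nonneg (mul_nonneg hρ₀ hM₂0) (mul_nonneg hα (hτ i))]
    exact le_of_mul_le_mul_right this hcij
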